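/- arXiv:2502.17190 — 2 statements merged into one kernel-verified Lean document; each statement's English description precedes it below -/
import Mathlib

section
/- Let X be a locally compact Hausdorff space and let O be a basis for the topology of X that contains the empty set and is closed under finite unions and finite intersections. Let U₁,…,Uₙ, V₁,…,V_m ∈ O. Then the pointwise inequality ∑_{i=1}^n 1_{U_i} ≤ ∑_{j=1}^m 1_{V_j} holds if and only if for all compact subsets K_i ⊆ U_i (1 ≤ i ≤ n) there are sets W_{i,j} ∈ O, for 1 ≤ i ≤ n and 1 ≤ j ≤ m, such that K_i ⊆ ⋃_{j=1}^m W_{i,j} for every i, and for every j the sets W_{1,j},…,W_{n,j} are pairwise disjoint with union contained in V_j. -/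
set_option linter.unusedSectionVars false

open TopologicalSpace Set Finset

section Aux

variable {X : Type*} [TopologicalSpace X]

/-- counting function: number of sets in the family containing `x`. -/
noncomputable def stmt16Cnt {k : ℕ} (A : Fin k → Set X) (x : X) : ℕ :=
  ∑ i, (A i).indicator 1 x

lemma stmt16Cnt_mono {k : ℕ} {A : Fin k → Set X} {x y : X}
    (h : ∀ i, x ∈ A i → y ∈ A i) : stmt16Cnt A x ≤ stmt16Cnt A y := by
  refine Finset.sum_le_sum fun i _ => ?_
  by_cases hx : x ∈ A i
  · simp [Set.indicator_of_mem hx, Set.indicator_of_mem (h i hx)]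
  · simp [Set.indicator_of_notMem hx]

lemma stmt16Cnt_le_of_subset {k : ℕ} {A B : Fin k → Set X} (h : ∀ i, A i ⊆ B i) (x : X) :
    stmt16Cnt A x ≤ stmt16Cnt B x := by
  refine Finset.sum_le_sum fun i _ => ?_
  by_cases hx : x ∈ A i
  · simp [Set.indicator_of_mem hx, Set.indicator_of_mem (h i hx)]
  · simp [Set.indicator_of_notMem hx]

lemma stmt16Cnt_pos {k : ℕ} {A : Fin k → Set X} {x : X} {i : Fin k} (h : x ∈ A i) :
    1 ≤ stmt16Cnt A x := by
  have h1 : (A i).indicator (1 : X → ℕ) x = 1 := Set.indicator_of_mem h 1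
  have h2 := Finset.single_le_sum (f := fun i => (A i).indicator (1 : X → ℕ) x)
    (fun i _ => Nat.zero_le _) (Finset.mem_univ i)
  rw [h1] at h2
  exact h2

lemma stmt16Cnt_exists {k : ℕ} {A : Fin k → Set X} {x : X} (h : 1 ≤ stmt16Cnt A x) :
    ∃ i, x ∈ A i := by
  by_contra hc
  push_neg at hc
  have h0 : stmt16Cnt A x = 0 :=
    Finset.sum_eq_zero fun i _ => Set.indicator_of_notMem (hc i) 1
  omega

lemma stmt16Cnt_eq_card {k : ℕ} (A : Fin k → Set X) (x : X)
    [DecidablePred fun i => x ∈ A i] :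
    stmt16Cnt A x = ((Finset.univ : Finset (Fin k)).filter (fun i => x ∈ A i)).card := by
  rw [Finset.card_filter]
  refine Finset.sum_congr rfl fun i _ => ?_
  by_cases h : x ∈ A i <;> simp [h]

lemma stmt16Cnt_card_le {k : ℕ} {A : Fin k → Set X} {x : X} (S : Finset (Fin k))
    (h : ∀ i ∈ S, x ∈ A i) : S.card ≤ stmt16Cnt A x := by
  calc S.card = ∑ _i ∈ S, 1 := Finset.card_eq_sum_ones S
    _ ≤ ∑ i ∈ S, (A i).indicator 1 x :=
        Finset.sum_le_sum fun i hi => by simp [Set.indicator_of_mem (h i hi)]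
    _ ≤ stmt16Cnt A x :=
        Finset.sum_le_sum_of_subset (Finset.subset_univ S)

lemma stmt16Cnt_subset_total {k : ℕ} {A : Fin k → Set X} {x y : X}
    (hsub : ∀ i, y ∈ A i → x ∈ A i) (hc : stmt16Cnt A x ≤ stmt16Cnt A y) :
    ∀ i, x ∈ A i → y ∈ A i := by
  intro i hxi
  by_contra hyi
  have hlt : stmt16Cnt A y < stmt16Cnt A x := by
    refine Finset.sum_lt_sum (fun i' _ => ?_) ⟨i, Finset.mem_univ i, ?_⟩
    · by_cases hy : y ∈ A i'
      · simp [Set.indicator_of_mem hy, Set.indicator_of_mem (hsub i' hy)]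
      · simp [Set.indicator_of_notMem hy]
    · simp [Set.indicator_of_mem hxi, Set.indicator_of_notMem hyi]
  omega

end Aux
open TopologicalSpace Set Finset

section Aux2
variable {X : Type*} [TopologicalSpace X] [T2Space X]

/-- Two compact sets, an open set containing their intersection: open thickenings whose
intersection is inside the given open set. -/
lemma stmt16A2 {K₁ K₂ G : Set X} (h1 : IsCompact K₁) (h2 : IsCompact K₂)
    (hG : IsOpen G) (h : K₁ ∩ K₂ ⊆ G) :
    ∃ O₁ O₂ : Set X, IsOpen O₁ ∧ IsOpen O₂ ∧ K₁ ⊆ O₁ ∧ K₂ ⊆ O₂ ∧ O₁ ∩ O₂ ⊆ G := by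
  have hd : Disjoint (K₁ ∩ Gᶜ) (K₂ ∩ Gᶜ) := by
    rw [Set.disjoint_left]
    rintro x ⟨hx1, hxG⟩ ⟨hx2, -⟩
    exact hxG (h ⟨hx1, hx2⟩)
  obtain ⟨B₁, B₂, hB₁, hB₂, hC₁, hC₂, hB⟩ :=
    SeparatedNhds.of_isCompact_isCompact (h1.inter_right hG.isClosed_compl)
      (h2.inter_right hG.isClosed_compl) hd
  refine ⟨G ∪ B₁, G ∪ B₂, hG.union hB₁, hG.union hB₂, ?_, ?_, ?_⟩
  · intro x hx
    by_cases hxG : x ∈ G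
    · exact Or.inl hxG
    · exact Or.inr (hC₁ ⟨hx, hxG⟩)
  · intro x hx
    by_cases hxG : x ∈ G
    · exact Or.inl hxG
    · exact Or.inr (hC₂ ⟨hx, hxG⟩)
  · rintro x ⟨hx1, hx2⟩
    rcases hx1 with hx1 | hx1
    · exact hx1
    rcases hx2 with hx2 | hx2
    · exact hx2
    exact absurd hx2 (Set.disjoint_left.1 hB hx1)

/-- Finitely many compact sets, an open set containing their intersection: open thickenings
whose intersection is inside the given open set. -/
lemma stmt16A {ι : Type*} [DecidableEq ι] (S : Finset ι) :
    ∀ (K : ι → Set X), (∀ i, IsCompact (K i)) → ∀ (G : Set X), IsOpen G →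
    (⋂ i ∈ S, K i) ⊆ G →
    ∃ O : ι → Set X, (∀ i, IsOpen (O i)) ∧ (∀ i, K i ⊆ O i) ∧ (⋂ i ∈ S, O i) ⊆ G := by
  induction S using Finset.induction_on with
  | empty =>
    intro K hK G hG h
    refine ⟨fun _ => Set.univ, fun _ => isOpen_univ, fun _ => Set.subset_univ _, ?_⟩
    simpa using h
  | @insert a S' ha ih =>
    intro K hK G hG h
    rcases S'.eq_empty_or_nonempty with hS' | ⟨b, hb⟩
    · subst hS'
      have hKa : K a ⊆ G := by simpa using h
      refine ⟨fun i => if i = a then G else Set.univ, ?_, ?_, ?_⟩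
      · intro i; dsimp only; split <;> [exact hG; exact isOpen_univ]
      · intro i; dsimp only
        by_cases hi : i = a
        · subst hi; simp [hKa]
        · simp [hi]
      · intro x hx
        have := Set.mem_iInter₂.1 hx a (Finset.mem_insert_self a ∅)
        simpa using this
    · have h' : (⋂ i ∈ S', (K a ∩ K i)) ⊆ G := by
        intro x hx
        have hxb := Set.mem_iInter₂.1 hx b hb
        apply h
        refine Set.mem_iInter₂.2 fun i hi => ?_
        rcases Finset.mem_insert.1 hi with rfl | hi
        · exact hxb.1
        · exact (Set.mem_iInter₂.1 hx i hi).2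
      obtain ⟨P, hPo, hPk, hPG⟩ :=
        ih (fun i => K a ∩ K i) (fun i => (hK a).inter (hK i)) G hG h'
      have h2 : ∀ i, ∃ Q R : Set X,
          IsOpen Q ∧ IsOpen R ∧ K a ⊆ Q ∧ K i ⊆ R ∧ Q ∩ R ⊆ P i :=
        fun i => stmt16A2 (hK a) (hK i) (hPo i) (hPk i)
      choose Q R hQo hRo hKQ hKR hQR using h2
      refine ⟨fun i => if i = a then ⋂ i' ∈ S', Q i' else R i, ?_, ?_, ?_⟩
      · intro i; dsimp only; split
        · exact isOpen_biInter_finset fun i' _ => hQo i'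
        · exact hRo i
      · intro i; dsimp only
        by_cases hi : i = a
        · subst hi; simp only [if_pos rfl]
          exact Set.subset_iInter₂ fun i' _ => hKQ i'
        · simp only [if_neg hi]; exact hKR i
      · intro x hx
        apply hPG
        refine Set.mem_iInter₂.2 fun i hi => ?_
        have hia : i ≠ a := fun hia => ha (hia ▸ hi)
        have hxa := Set.mem_iInter₂.1 hx a (Finset.mem_insert_self a S')
        dsimp only at hxa
        rw [if_pos rfl] at hxa
        have hxi := Set.mem_iInter₂.1 hx i (Finset.mem_insert_of_mem hi)
        dsimp only at hxi
        rw [if_neg hia] at hxi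
        exact hQR i ⟨Set.mem_iInter₂.1 hxa i hi, hxi⟩

/-- Pairwise disjoint compact sets can be thickened to pairwise disjoint open sets. -/
lemma stmt16DisjOpens {k : ℕ} (C : Fin k → Set X) (hC : ∀ i, IsCompact (C i))
    (hd : ∀ i i', i ≠ i' → Disjoint (C i) (C i')) :
    ∃ D : Fin k → Set X, (∀ i, IsOpen (D i)) ∧ (∀ i, C i ⊆ D i) ∧
      ∀ i i', i ≠ i' → Disjoint (D i) (D i') := by
  have h : ∀ i i', ∃ A B : Set X, IsOpen A ∧ IsOpen B ∧ C i ⊆ A ∧ C i' ⊆ B ∧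
      (i ≠ i' → Disjoint A B) := by
    intro i i'
    by_cases hne : i = i'
    · exact ⟨Set.univ, Set.univ, isOpen_univ, isOpen_univ, Set.subset_univ _,
        Set.subset_univ _, fun hne' => absurd hne hne'⟩
    · obtain ⟨A, B, hA, hB, hCA, hCB, hAB⟩ :=
        SeparatedNhds.of_isCompact_isCompact (hC i) (hC i') (hd i i' hne)
      exact ⟨A, B, hA, hB, hCA, hCB, fun _ => hAB⟩
  choose A B hA hB hCA hCB hAB using h
  refine ⟨fun i => (⋂ i', A i i') ∩ (⋂ i', B i' i),
    fun i => (isOpen_iInter_of_finite fun i' => hA i i').inter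
      (isOpen_iInter_of_finite fun i' => hB i' i),
    fun i => Set.subset_inter (Set.subset_iInter fun i' => hCA i i')
      (Set.subset_iInter fun i' => hCB i' i), ?_⟩
  intro i i' hne
  refine (hAB i i' hne).mono ?_ ?_
  · exact fun x hx => Set.mem_iInter.1 hx.1 i'
  · exact fun x hx => Set.mem_iInter.1 hx.2 i

/-- Openness of superlevel sets of the counting function. -/
lemma stmt16OpenLevel {l : ℕ} (V : Fin l → Set X) (hV : ∀ j, IsOpen (V j)) (c : ℕ) :
    IsOpen {x | c ≤ stmt16Cnt V x} := by
  classical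
  rw [isOpen_iff_forall_mem_open]
  intro x hx
  refine ⟨⋂ j ∈ Finset.univ.filter (fun j => x ∈ V j), V j, ?_,
    isOpen_biInter_finset fun j _ => hV j, ?_⟩
  · intro y hy
    have hmono : stmt16Cnt V x ≤ stmt16Cnt V y := by
      refine stmt16Cnt_mono fun j hj => ?_
      exact Set.mem_iInter₂.1 hy j (Finset.mem_filter.2 ⟨Finset.mem_univ j, hj⟩)
    exact le_trans hx hmono
  · exact Set.mem_iInter₂.2 fun j hj => (Finset.mem_filter.1 hj).2

/-- Thickening lemma: compact sets satisfying the pointwise counting inequality against a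
family of open sets can be thickened to open sets satisfying the same inequality. -/
lemma stmt16B {k l : ℕ} (K : Fin k → Set X) (hK : ∀ i, IsCompact (K i))
    (V : Fin l → Set X) (hV : ∀ j, IsOpen (V j))
    (h : ∀ x, stmt16Cnt K x ≤ stmt16Cnt V x) :
    ∃ U : Fin k → Set X, (∀ i, IsOpen (U i)) ∧ (∀ i, K i ⊆ U i) ∧
      ∀ x, stmt16Cnt U x ≤ stmt16Cnt V x := by
  classical
  have hKS : ∀ S : Finset (Fin k), (⋂ i ∈ S, K i) ⊆ {x | S.card ≤ stmt16Cnt V x} := by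
    intro S x hx
    have h1 : S.card ≤ stmt16Cnt K x :=
      stmt16Cnt_card_le S fun i hi => Set.mem_iInter₂.1 hx i hi
    exact le_trans h1 (h x)
  choose OO hOo hOk hOG using fun S : Finset (Fin k) =>
    stmt16A S K hK _ (stmt16OpenLevel V hV S.card) (hKS S)
  refine ⟨fun i => ⋂ S : Finset (Fin k), OO S i,
    fun i => isOpen_iInter_of_finite fun S => hOo S i,
    fun i => Set.subset_iInter fun S => hOk S i, ?_⟩
  intro x
  set S : Finset (Fin k) :=
    Finset.univ.filter (fun i => x ∈ ⋂ S' : Finset (Fin k), OO S' i) with hSdef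
  have hcard : stmt16Cnt (fun i => ⋂ S' : Finset (Fin k), OO S' i) x = S.card :=
    stmt16Cnt_eq_card _ x
  rw [hcard]
  have hxS : x ∈ ⋂ i ∈ S, OO S i := by
    refine Set.mem_iInter₂.2 fun i hi => ?_
    have := (Finset.mem_filter.1 hi).2
    exact Set.mem_iInter.1 this S
  exact hOG S hxS

end Aux2

section Aux4
variable {X : Type*} [TopologicalSpace X]

/-- A finite union of members of a family closed under binary unions and containing `∅`. -/
lemma stmt16UnionMem {α : Type*} (O : Set (Set X)) (hO_empty : (∅ : Set X) ∈ O)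
    (hO_union : ∀ U ∈ O, ∀ V ∈ O, U ∪ V ∈ O) (s : Finset α) (f : α → Set X)
    (hf : ∀ a ∈ s, f a ∈ O) : (⋃ a ∈ s, f a) ∈ O := by
  classical
  induction s using Finset.induction_on with
  | empty => simpa using hO_empty
  | @insert a s ha ih =>
    rw [Finset.set_biUnion_insert]
    exact hO_union _ (hf a (Finset.mem_insert_self a s)) _
      (ih fun a' ha' => hf a' (Finset.mem_insert_of_mem ha'))

end Aux4


section Aux3
variable {X : Type*} [TopologicalSpace X] [T2Space X]

/-- Open-set version of the main theorem, by induction on the number of `V`'s. -/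
lemma stmt16Open : ∀ (m : ℕ) (V : Fin m → Set X), (∀ j, IsOpen (V j)) →
    ∀ {n : ℕ} (U K : Fin n → Set X), (∀ i, IsOpen (U i)) → (∀ i, IsCompact (K i)) →
    (∀ i, K i ⊆ U i) → (∀ x, stmt16Cnt U x ≤ stmt16Cnt V x) →
    ∃ W : Fin n → Fin m → Set X,
      (∀ i j, IsOpen (W i j)) ∧ (∀ i, K i ⊆ ⋃ j, W i j) ∧
      (∀ j i i', i ≠ i' → Disjoint (W i j) (W i' j)) ∧ (∀ i j, W i j ⊆ V j) := by
  intro m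
  induction m with
  | zero =>
    intro V hV n U K hU hK hKU hle
    refine ⟨fun _ j => j.elim0, fun i j => j.elim0, fun i => ?_, fun j => j.elim0,
      fun i j => j.elim0⟩
    intro x hx
    have h1 : 1 ≤ stmt16Cnt U x := stmt16Cnt_pos (hKU i hx)
    have h0 : stmt16Cnt V x = 0 := by simp [stmt16Cnt]
    have := le_trans h1 (hle x)
    omega
  | succ m ih =>
    intro V hV n U K hU hK hKU hle
    classical
    set V' : Fin m → Set X := fun j => V j.castSucc with hV'def
    have hV'o : ∀ j, IsOpen (V' j) := fun j => hV _
    set T : Set X := {x | stmt16Cnt V' x + 1 ≤ stmt16Cnt K x} with hTdef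
    have hsplit : ∀ x, stmt16Cnt V x
        = stmt16Cnt V' x + (V (Fin.last m)).indicator 1 x := by
      intro x
      unfold stmt16Cnt
      rw [Fin.sum_univ_castSucc (f := fun j => (V j).indicator 1 x)]
    have key : ∀ x ∈ T, stmt16Cnt K x = stmt16Cnt V' x + 1 ∧ x ∈ V (Fin.last m) := by
      intro x hx
      have h4 : stmt16Cnt V' x + 1 ≤ stmt16Cnt K x := hx
      have h1 : stmt16Cnt K x ≤ stmt16Cnt U x := stmt16Cnt_le_of_subset hKU x
      have h3 := hle x
      have h2 := hsplit x
      by_cases hl : x ∈ V (Fin.last m)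
      · rw [Set.indicator_of_mem hl] at h2
        simp only [Pi.one_apply] at h2
        exact ⟨by omega, hl⟩
      · rw [Set.indicator_of_notMem hl] at h2
        omega
    have hTclosed : IsClosed T := by
      rw [← isOpen_compl_iff, isOpen_iff_forall_mem_open]
      intro x hx
      refine ⟨(⋂ i ∈ Finset.univ.filter (fun i => x ∉ K i), (K i)ᶜ) ∩
        (⋂ j ∈ Finset.univ.filter (fun j => x ∈ V' j), V' j), ?_, ?_, ?_⟩
      · rintro y ⟨hy1, hy2⟩
        have hKle : stmt16Cnt K y ≤ stmt16Cnt K x := by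
          refine stmt16Cnt_mono fun i hyi => ?_
          by_contra hxi
          exact Set.mem_iInter₂.1 hy1 i
            (Finset.mem_filter.2 ⟨Finset.mem_univ i, hxi⟩) hyi
        have hVle : stmt16Cnt V' x ≤ stmt16Cnt V' y := by
          refine stmt16Cnt_mono fun j hxj => ?_
          exact Set.mem_iInter₂.1 hy2 j (Finset.mem_filter.2 ⟨Finset.mem_univ j, hxj⟩)
        have hxT : ¬ (stmt16Cnt V' x + 1 ≤ stmt16Cnt K x) := hx
        intro hyT
        have : stmt16Cnt V' y + 1 ≤ stmt16Cnt K y := hyT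
        omega
      · exact (isOpen_biInter_finset fun i _ => (hK i).isClosed.isOpen_compl).inter
          (isOpen_biInter_finset fun j _ => hV'o j)
      · exact ⟨Set.mem_iInter₂.2 fun i hi => (Finset.mem_filter.1 hi).2,
          Set.mem_iInter₂.2 fun j hj => (Finset.mem_filter.1 hj).2⟩
    have hTcomp : IsCompact T := by
      refine (isCompact_iUnion hK).of_isClosed_subset hTclosed ?_
      intro x hx
      have h4 : stmt16Cnt V' x + 1 ≤ stmt16Cnt K x := hx
      obtain ⟨i, hi⟩ := stmt16Cnt_exists (Nat.le_trans (Nat.le_add_left 1 _) h4)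
      exact Set.mem_iUnion.2 ⟨i, hi⟩
    have hloc : ∀ x ∈ T, ∃ N : Set X, IsOpen N ∧ x ∈ N ∧
        ∀ y ∈ N, y ∈ T → ∀ i, x ∈ K i ↔ y ∈ K i := by
      intro x hxT
      refine ⟨(⋂ i ∈ Finset.univ.filter (fun i => x ∉ K i), (K i)ᶜ) ∩
        (⋂ j ∈ Finset.univ.filter (fun j => x ∈ V' j), V' j), ?_, ?_, ?_⟩
      · exact (isOpen_biInter_finset fun i _ => (hK i).isClosed.isOpen_compl).inter
          (isOpen_biInter_finset fun j _ => hV'o j)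
      · exact ⟨Set.mem_iInter₂.2 fun i hi => (Finset.mem_filter.1 hi).2,
          Set.mem_iInter₂.2 fun j hj => (Finset.mem_filter.1 hj).2⟩
      · rintro y ⟨hy1, hy2⟩ hyT i
        have hsubK : ∀ i, y ∈ K i → x ∈ K i := by
          intro i hyi
          by_contra hxi
          exact Set.mem_iInter₂.1 hy1 i
            (Finset.mem_filter.2 ⟨Finset.mem_univ i, hxi⟩) hyi
        have hVle : stmt16Cnt V' x ≤ stmt16Cnt V' y := by
          refine stmt16Cnt_mono fun j hxj => ?_
          exact Set.mem_iInter₂.1 hy2 j (Finset.mem_filter.2 ⟨Finset.mem_univ j, hxj⟩)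
        have e1 := (key x hxT).1
        have e2 := (key y hyT).1
        have hc : stmt16Cnt K x ≤ stmt16Cnt K y := by omega
        exact ⟨fun hxi => stmt16Cnt_subset_total hsubK hc i hxi, fun hyi => hsubK i hyi⟩
    -- the pieces of T
    set Tp : Fin n → Set X :=
      fun i => {x | x ∈ T ∧ x ∈ K i ∧ ∀ i', i' < i → x ∉ K i'} with hTpdef
    have hTpcover : ∀ x ∈ T, ∃ i, x ∈ Tp i := by
      intro x hxT
      have h4 : stmt16Cnt V' x + 1 ≤ stmt16Cnt K x := hxT
      obtain ⟨i, hi⟩ := stmt16Cnt_exists (A := K)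
        (Nat.le_trans (Nat.le_add_left 1 _) h4)
      have hne : (Finset.univ.filter (fun i => x ∈ K i)).Nonempty :=
        ⟨i, Finset.mem_filter.2 ⟨Finset.mem_univ i, hi⟩⟩
      obtain ⟨i₀, hi₀, hmin⟩ := Finset.exists_min_image _ id hne
      refine ⟨i₀, hxT, (Finset.mem_filter.1 hi₀).2, fun i' hi' hxi' => ?_⟩
      have := hmin i' (Finset.mem_filter.2 ⟨Finset.mem_univ i', hxi'⟩)
      simp only [id] at this
      exact absurd hi' (not_lt.2 this)
    have hTpdisj : ∀ i i', i ≠ i' → Disjoint (Tp i) (Tp i') := by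
      intro i i' hne
      rw [Set.disjoint_left]
      intro x hxi hxi'
      rcases hne.lt_or_gt with hlt | hlt
      · exact hxi'.2.2 i hlt hxi.2.1
      · exact hxi.2.2 i' hlt hxi'.2.1
    have hTpclosed : ∀ i, IsClosed (Tp i) := by
      intro i
      rw [← isOpen_compl_iff, isOpen_iff_forall_mem_open]
      intro x hx
      by_cases hxT : x ∈ T
      · obtain ⟨N, hNo, hxN, hNT⟩ := hloc x hxT
        refine ⟨N, ?_, hNo, hxN⟩
        intro y hyN hyTp
        refine hx ?_
        have hiff := hNT y hyN hyTp.1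
        exact ⟨hxT, (hiff i).2 hyTp.2.1,
          fun i' hi' hxKi' => hyTp.2.2 i' hi' ((hiff i').1 hxKi')⟩
      · exact ⟨Tᶜ, fun y hy hyTp => hy hyTp.1, hTclosed.isOpen_compl, hxT⟩
    have hTpcomp : ∀ i, IsCompact (Tp i) :=
      fun i => hTcomp.of_isClosed_subset (hTpclosed i) (fun x hx => hx.1)
    obtain ⟨D, hDo, hTpD, hDdisj⟩ := stmt16DisjOpens Tp hTpcomp hTpdisj
    set D' : Fin n → Set X := fun i => D i ∩ V (Fin.last m) with hD'def
    have hD'o : ∀ i, IsOpen (D' i) := fun i => (hDo i).inter (hV _)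
    have hTpD' : ∀ i, Tp i ⊆ D' i := by
      intro i x hx
      exact ⟨hTpD i hx, (key x hx.1).2⟩
    have hD'disj : ∀ i i', i ≠ i' → Disjoint (D' i) (D' i') :=
      fun i i' hne => (hDdisj i i' hne).mono Set.inter_subset_left Set.inter_subset_left
    set K' : Fin n → Set X := fun i => K i \ D' i with hK'def
    have hK'c : ∀ i, IsCompact (K' i) := fun i => (hK i).diff (hD'o i)
    have hK'le : ∀ x, stmt16Cnt K' x ≤ stmt16Cnt V' x := by
      intro x
      by_cases hxT : x ∈ T
      · obtain ⟨i₀, hi₀⟩ := hTpcover x hxT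
        have h1 : stmt16Cnt K' x < stmt16Cnt K x := by
          refine Finset.sum_lt_sum (fun i _ => ?_) ⟨i₀, Finset.mem_univ i₀, ?_⟩
          · by_cases hxi : x ∈ K' i
            · simp [Set.indicator_of_mem hxi, Set.indicator_of_mem hxi.1]
            · simp [Set.indicator_of_notMem hxi]
          · have hxD : x ∈ D' i₀ := hTpD' i₀ hi₀
            have hxK' : x ∉ K' i₀ := fun hc => hc.2 hxD
            simp [Set.indicator_of_notMem hxK', Set.indicator_of_mem hi₀.2.1]
        have h2 := (key x hxT).1
        omega
      · have h3 : ¬ (stmt16Cnt V' x + 1 ≤ stmt16Cnt K x) := hxT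
        have h4 : stmt16Cnt K' x ≤ stmt16Cnt K x :=
          stmt16Cnt_le_of_subset (fun i => Set.diff_subset) x
        omega
    obtain ⟨U', hU'o, hU'K, hU'le⟩ := stmt16B K' hK'c V' hV'o hK'le
    obtain ⟨W', hW'o, hW'cov, hW'disj, hW'V⟩ := ih V' hV'o U' K' hU'o hK'c hU'K hU'le
    refine ⟨fun i => Fin.lastCases (D' i) (W' i), ?_, ?_, ?_, ?_⟩
    · intro i j
      refine Fin.lastCases ?_ ?_ j
      · simp only [Fin.lastCases_last]; exact hD'o i
      · intro j'; simp only [Fin.lastCases_castSucc]; exact hW'o i j'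
    · intro i x hx
      by_cases hxD : x ∈ D' i
      · exact Set.mem_iUnion.2 ⟨Fin.last m, by simpa only [Fin.lastCases_last]⟩
      · have hxK' : x ∈ K' i := ⟨hx, hxD⟩
        obtain ⟨j, hj⟩ := Set.mem_iUnion.1 (hW'cov i hxK')
        exact Set.mem_iUnion.2 ⟨j.castSucc, by simpa only [Fin.lastCases_castSucc]⟩
    · intro j i i' hne
      refine Fin.lastCases ?_ ?_ j
      · simp only [Fin.lastCases_last]; exact hD'disj i i' hne
      · intro j'; simp only [Fin.lastCases_castSucc]
        exact hW'disj j' i i' hne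
    · intro i j
      refine Fin.lastCases ?_ ?_ j
      · simp only [Fin.lastCases_last]; exact Set.inter_subset_right
      · intro j'; simp only [Fin.lastCases_castSucc]; exact hW'V i j'

end Aux3



open TopologicalSpace

/-- For `U₁, …, Uₙ, V₁, …, V_m ∈ O`, the inequality `∑ 1_{U_i} ≤ ∑ 1_{V_j}` holds
pointwise if and only if for all compact `K_i ⊆ U_i` there are `W_{i,j} ∈ O` with
`K_i ⊆ ⋃_j W_{i,j}` for each `i` and, for each `j`, the sets `W_{1,j}, …, W_{n,j}`
pairwise disjoint with union contained in `V_j`. -/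
theorem stmt16 {X : Type*} [TopologicalSpace X] [T2Space X] [LocallyCompactSpace X]
    (O : Set (Set X))
    (hO_empty : (∅ : Set X) ∈ O)
    (hO_basis : IsTopologicalBasis O)
    (hO_union : ∀ U ∈ O, ∀ V ∈ O, U ∪ V ∈ O)
    (hO_inter : ∀ U ∈ O, ∀ V ∈ O, U ∩ V ∈ O)
    (n m : ℕ)
    (U : Fin n → Set X) (hU : ∀ i, U i ∈ O)
    (V : Fin m → Set X) (hV : ∀ j, V j ∈ O) :
    ((∑ i, Set.indicator (U i) (1 : X → ℕ)) ≤
        ∑ j, Set.indicator (V j) (1 : X → ℕ)) ↔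
      (∀ K : Fin n → Set X, (∀ i, IsCompact (K i)) → (∀ i, K i ⊆ U i) →
        ∃ W : Fin n → Fin m → Set X,
          (∀ i j, W i j ∈ O) ∧
          (∀ i, K i ⊆ ⋃ j, W i j) ∧
          (∀ j, ∀ i i' : Fin n, i ≠ i' → Disjoint (W i j) (W i' j)) ∧
          (∀ j, (⋃ i, W i j) ⊆ V j)) := by
  classical
  have hsum : ∀ (k : ℕ) (A : Fin k → Set X) (x : X),
      (∑ i, Set.indicator (A i) (1 : X → ℕ)) x = stmt16Cnt A x := by
    intro k A x
    rw [Finset.sum_apply]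
    rfl
  constructor
  · -- forward direction
    intro hle K hKc hKU
    have hle' : ∀ x, stmt16Cnt U x ≤ stmt16Cnt V x := by
      intro x
      have := hle x
      rwa [hsum, hsum] at this
    obtain ⟨W, hWo, hWcov, hWdisj, hWV⟩ := stmt16Open m V (fun j => hO_basis.isOpen (hV j))
      U K (fun i => hO_basis.isOpen (hU i)) hKc hKU hle'
    rcases Nat.eq_zero_or_pos m with hm | hm
    · subst hm
      refine ⟨fun _ j => j.elim0, fun i j => j.elim0, fun i => ?_,
        fun j => j.elim0, fun j => j.elim0⟩
      intro x hx
      obtain ⟨j, -⟩ := Set.mem_iUnion.1 (hWcov i hx)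
      exact j.elim0
    · have : Nonempty (Fin m) := ⟨⟨0, hm⟩⟩
      have hsel : ∀ i (x : X), ∃ (B : Set X) (j : Fin m),
          x ∈ K i → (B ∈ O ∧ x ∈ B ∧ B ⊆ W i j) := by
        intro i x
        by_cases hx : x ∈ K i
        · obtain ⟨j, hj⟩ := Set.mem_iUnion.1 (hWcov i hx)
          obtain ⟨B, hBO, hxB, hBW⟩ :=
            hO_basis.exists_subset_of_mem_open hj (hWo i j)
          exact ⟨B, j, fun _ => ⟨hBO, hxB, hBW⟩⟩
        · exact ⟨∅, Classical.arbitrary _, fun h => absurd h hx⟩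
      choose Bf jf hsel' using hsel
      have hnhds : ∀ i, ∀ x ∈ K i, Bf i x ∈ nhds x := by
        intro i x hx
        obtain ⟨hBO, hxB, -⟩ := hsel' i x hx
        exact (hO_basis.isOpen hBO).mem_nhds hxB
      choose t ht hcov using fun i => (hKc i).elim_nhds_subcover (Bf i) (hnhds i)
      set Wf : Fin n → Fin m → Set X :=
        fun i j => ⋃ x ∈ (t i).filter (fun x => jf i x = j), Bf i x with hWfdef
      have hWfsub : ∀ i j, Wf i j ⊆ W i j := by
        intro i j
        refine Set.iUnion₂_subset fun y hy => ?_
        obtain ⟨hyt, hyj⟩ := Finset.mem_filter.1 hy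
        obtain ⟨-, -, hBW⟩ := hsel' i y (ht i y hyt)
        rw [hyj] at hBW
        exact hBW
      refine ⟨Wf, fun i j => ?_, fun i => ?_, fun j i i' hne => ?_, fun j => ?_⟩
      · refine stmt16UnionMem O hO_empty hO_union _ _ fun y hy => ?_
        exact (hsel' i y (ht i y (Finset.mem_filter.1 hy).1)).1
      · intro x hx
        obtain ⟨y, hyt, hxy⟩ := Set.mem_iUnion₂.1 (hcov i hx)
        refine Set.mem_iUnion.2 ⟨jf i y, ?_⟩
        exact Set.mem_iUnion₂.2 ⟨y, Finset.mem_filter.2 ⟨hyt, rfl⟩, hxy⟩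
      · exact (hWdisj j i i' hne).mono (hWfsub i j) (hWfsub i' j)
      · exact Set.iUnion_subset fun i => (hWfsub i j).trans (hWV i j)
  · -- reverse direction
    intro hyp x
    rw [hsum, hsum]
    by_cases hex : ∃ i, x ∈ U i
    · set K : Fin n → Set X := fun i => if x ∈ U i then {x} else ∅ with hKdef
      have hKc : ∀ i, IsCompact (K i) := by
        intro i
        by_cases h : x ∈ U i
        · simp only [hKdef, if_pos h]; exact isCompact_singleton
        · simp only [hKdef, if_neg h]; exact isCompact_empty
      have hKU : ∀ i, K i ⊆ U i := by
        intro i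
        by_cases h : x ∈ U i
        · simp only [hKdef, if_pos h]; exact Set.singleton_subset_iff.2 h
        · simp only [hKdef, if_neg h]; exact Set.empty_subset _
      obtain ⟨W, hWO, hWcov, hWdisj, hWV⟩ := hyp K hKc hKU
      obtain ⟨i₀, hi₀⟩ := hex
      have hxK₀ : x ∈ K i₀ := by simp [hKdef, hi₀]
      obtain ⟨j₀, -⟩ := Set.mem_iUnion.1 (hWcov i₀ hxK₀)
      have : Nonempty (Fin m) := ⟨j₀⟩
      have hsel : ∀ i, ∃ j, x ∈ U i → x ∈ W i j := by
        intro i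
        by_cases hx : x ∈ U i
        · have hxK : x ∈ K i := by simp [hKdef, hx]
          obtain ⟨j, hj⟩ := Set.mem_iUnion.1 (hWcov i hxK)
          exact ⟨j, fun _ => hj⟩
        · exact ⟨Classical.arbitrary _, fun h => absurd h hx⟩
      choose g hg using hsel
      rw [stmt16Cnt_eq_card, stmt16Cnt_eq_card]
      refine Finset.card_le_card_of_injOn g ?_ ?_
      · intro i hi
        have hxU : x ∈ U i := (Finset.mem_filter.1 hi).2
        exact Finset.mem_filter.2 ⟨Finset.mem_univ _,
          hWV (g i) (Set.mem_iUnion.2 ⟨i, hg i hxU⟩)⟩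
      · intro i hi i' hi' hgg
        by_contra hne
        have h1 : x ∈ W i (g i) := hg i (by simpa using hi)
        have h2 : x ∈ W i' (g i') := hg i' (by simpa using hi')
        rw [hgg] at h1
        exact Set.disjoint_left.1 (hWdisj (g i') i i' hne) h1 h2
    · push_neg at hex
      have h0 : stmt16Cnt U x = 0 :=
        Finset.sum_eq_zero fun i _ => Set.indicator_of_notMem (hex i) 1
      rw [h0]
      exact Nat.zero_le _
end

section
/- (Riesz's Theorem for dimension functions) Let X be a locally compact Hausdorff space and let O be a basis for the topology of X that contains the empty set and is closed under finite unions. Then the restriction map μ ↦ μ|_O is a bijection from the set of regular Borel measures on X onto the set of regular dimension functions on O; that is, every regular Borel measure on X restricts to a regular dimension function on O, two regular Borel measures agreeing on O are equal, and every regular dimension function on O extends to a regular Borel measure on X. -/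
open MeasureTheory
open scoped ENNReal

/-- A Borel measure is regular if it is outer regular (on Borel sets) and inner regular
by compact sets on open sets. -/
def IsRegularBorel {X : Type*} [TopologicalSpace X] [MeasurableSpace X]
    (μ : Measure X) : Prop :=
  (∀ E : Set X, MeasurableSet E →
    μ E = ⨅ (V : Set X) (_ : IsOpen V) (_ : E ⊆ V), μ V) ∧
  (∀ V : Set X, IsOpen V →
    μ V = ⨆ (K : Set X) (_ : IsCompact K) (_ : K ⊆ V), μ K)

/-- A regular dimension function on a family `O` of open sets: monotone, subadditive,
additive on disjoint pairs, vanishing on `∅`, and inner regular with respect to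
compact containment. -/
def IsRegularDimFun {X : Type*} [TopologicalSpace X]
    (O : Set (Set X)) (ν : Set X → ℝ≥0∞) : Prop :=
  ν ∅ = 0 ∧
  (∀ V₁ ∈ O, ∀ V₂ ∈ O, V₁ ⊆ V₂ → ν V₁ ≤ ν V₂) ∧
  (∀ V₁ ∈ O, ∀ V₂ ∈ O, ν (V₁ ∪ V₂) ≤ ν V₁ + ν V₂) ∧
  (∀ V₁ ∈ O, ∀ V₂ ∈ O, Disjoint V₁ V₂ → ν (V₁ ∪ V₂) = ν V₁ + ν V₂) ∧
  (∀ V ∈ O, ν V = ⨆ (U : Set X) (_ : U ∈ O)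
    (_ : IsCompact (closure U) ∧ closure U ⊆ V), ν U)

set_option linter.unusedSectionVars false
set_option linter.unusedVariables false

namespace Stmt19Aux

lemma iSup_add_le_of_forall {ι : Sort*} {f : ι → ℝ≥0∞} {c B : ℝ≥0∞}
    (h0 : c ≤ B) (h : ∀ i, f i + c ≤ B) : (⨆ i, f i) + c ≤ B := by
  rcases eq_or_ne c ⊤ with rfl | hc
  · rw [top_le_iff.1 h0]; exact le_top
  · have h1 : (⨆ i, f i) ≤ B - c :=
      iSup_le fun i => ENNReal.le_sub_of_add_le_right hc (h i)
    calc (⨆ i, f i) + c ≤ (B - c) + c := add_le_add_left h1 c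
      _ = B := tsub_add_cancel_of_le h0

variable {X : Type*} [TopologicalSpace X] [T2Space X] [LocallyCompactSpace X]
variable {O : Set (Set X)}

lemma biUnion_mem (hO_empty : (∅ : Set X) ∈ O)
    (hO_union : ∀ U ∈ O, ∀ V ∈ O, U ∪ V ∈ O)
    {ι : Type*} (t : Finset ι) (f : ι → Set X) (hf : ∀ i ∈ t, f i ∈ O) :
    (⋃ i ∈ t, f i) ∈ O := by
  classical
  induction t using Finset.induction_on with
  | empty => simpa using hO_empty
  | @insert a s ha ih =>
    rw [Finset.set_biUnion_insert]
    exact hO_union _ (hf a (Finset.mem_insert_self a s)) _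
      (ih fun i hi => hf i (Finset.mem_insert_of_mem hi))

lemma nu_biUnion_le {ν : Set X → ℝ≥0∞} (hν0 : ν ∅ = 0)
    (hO_empty : (∅ : Set X) ∈ O)
    (hO_union : ∀ U ∈ O, ∀ V ∈ O, U ∪ V ∈ O)
    (hsub : ∀ V₁ ∈ O, ∀ V₂ ∈ O, ν (V₁ ∪ V₂) ≤ ν V₁ + ν V₂)
    {ι : Type*} (t : Finset ι) (f : ι → Set X) (hf : ∀ i ∈ t, f i ∈ O) :
    ν (⋃ i ∈ t, f i) ≤ ∑ i ∈ t, ν (f i) := by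
  classical
  induction t using Finset.induction_on with
  | empty => simp [hν0]
  | @insert a s ha ih =>
    rw [Finset.set_biUnion_insert, Finset.sum_insert ha]
    calc ν (f a ∪ ⋃ i ∈ s, f i)
        ≤ ν (f a) + ν (⋃ i ∈ s, f i) :=
          hsub _ (hf a (Finset.mem_insert_self a s)) _
            (biUnion_mem hO_empty hO_union s f fun i hi => hf i (Finset.mem_insert_of_mem hi))
      _ ≤ ν (f a) + ∑ i ∈ s, ν (f i) :=
          add_le_add_right (ih fun i hi => hf i (Finset.mem_insert_of_mem hi)) _
      _ = _ := rfl

lemma exists_O_between (hO_empty : (∅ : Set X) ∈ O)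
    (hO_basis : TopologicalSpace.IsTopologicalBasis O)
    (hO_union : ∀ U ∈ O, ∀ V ∈ O, U ∪ V ∈ O)
    {K V : Set X} (hK : IsCompact K) (hV : IsOpen V) (hKV : K ⊆ V) :
    ∃ U ∈ O, K ⊆ U ∧ IsCompact (closure U) ∧ closure U ⊆ V := by
  obtain ⟨L, hL, hKL, hLV⟩ := exists_compact_between hK hV hKV
  have hx : ∀ x : K, ∃ v, v ∈ O ∧ (x : X) ∈ v ∧ v ⊆ interior L := by
    intro x
    obtain ⟨v, hvO, hxv, hvL⟩ := hO_basis.exists_subset_of_mem_open (hKL x.2) isOpen_interior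
    exact ⟨v, hvO, hxv, hvL⟩
  choose u hu1 hu2 hu3 using hx
  obtain ⟨t, ht⟩ := hK.elim_finite_subcover u (fun x => hO_basis.isOpen (hu1 x))
    (fun x hxK => Set.mem_iUnion.2 ⟨⟨x, hxK⟩, hu2 _⟩)
  have hWL : (⋃ x ∈ t, u x) ⊆ L :=
    (Set.iUnion₂_subset fun i _ => (hu3 i).trans interior_subset)
  have hclL : closure (⋃ x ∈ t, u x) ⊆ L := closure_minimal hWL hL.isClosed
  exact ⟨⋃ x ∈ t, u x, biUnion_mem hO_empty hO_union t u (fun i _ => hu1 i), ht,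
    hL.of_isClosed_subset isClosed_closure hclL, hclL.trans hLV⟩

/-- The inner content associated to a dimension function. -/
noncomputable def lamFun (O : Set (Set X)) (ν : Set X → ℝ≥0∞) (V : Set X) : ℝ≥0∞ :=
  ⨆ (U : Set X) (_ : U ∈ O) (_ : IsCompact (closure U) ∧ closure U ⊆ V), ν U

variable {ν : Set X → ℝ≥0∞}

lemma le_lamFun {U V : Set X} (hU : U ∈ O) (hc : IsCompact (closure U))
    (hs : closure U ⊆ V) : ν U ≤ lamFun O ν V :=
  le_iSup_of_le U (le_iSup_of_le hU (le_iSup_of_le ⟨hc, hs⟩ le_rfl))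

lemma lamFun_le {V : Set X} {B : ℝ≥0∞}
    (h : ∀ U, U ∈ O → IsCompact (closure U) ∧ closure U ⊆ V → ν U ≤ B) :
    lamFun O ν V ≤ B :=
  iSup_le fun U => iSup_le fun hU => iSup_le fun hP => h U hU hP

lemma lamFun_mono {V V' : Set X} (h : V ⊆ V') : lamFun O ν V ≤ lamFun O ν V' :=
  lamFun_le fun _ hU hP => le_lamFun hU hP.1 (hP.2.trans h)

lemma lamFun_empty (hν0 : ν ∅ = 0) : lamFun O ν (∅ : Set X) = 0 := by
  refine le_antisymm (lamFun_le fun U _ hP => ?_) zero_le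
  have hU0 : U = ∅ := Set.subset_empty_iff.1 (subset_closure.trans hP.2)
  rw [hU0, hν0]

lemma lamFun_add_le {V : Set X} {c B : ℝ≥0∞} (h0 : c ≤ B)
    (h : ∀ U, U ∈ O → IsCompact (closure U) ∧ closure U ⊆ V → ν U + c ≤ B) :
    lamFun O ν V + c ≤ B := by
  refine iSup_add_le_of_forall h0 fun U => iSup_add_le_of_forall h0 fun hU =>
    iSup_add_le_of_forall h0 fun hP => h U hU hP

lemma lamFun_iUnion_le
    (hO_empty : (∅ : Set X) ∈ O)
    (hO_basis : TopologicalSpace.IsTopologicalBasis O)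
    (hO_union : ∀ U ∈ O, ∀ V ∈ O, U ∪ V ∈ O)
    (hν0 : ν ∅ = 0)
    (hmono : ∀ V₁ ∈ O, ∀ V₂ ∈ O, V₁ ⊆ V₂ → ν V₁ ≤ ν V₂)
    (hsub : ∀ V₁ ∈ O, ∀ V₂ ∈ O, ν (V₁ ∪ V₂) ≤ ν V₁ + ν V₂)
    (f : ℕ → Set X) (hf : ∀ n, IsOpen (f n)) :
    lamFun O ν (⋃ n, f n) ≤ ∑' n, lamFun O ν (f n) := by
  classical
  refine lamFun_le fun U hU hP => ?_
  obtain ⟨hc, hs⟩ := hP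
  obtain ⟨t, ht⟩ := hc.elim_finite_subcover f hf hs
  obtain ⟨K, hKc, hKU, hKeq⟩ := hc.finite_compact_cover t f (fun i _ => hf i) ht
  have hex : ∀ i, ∃ W, W ∈ O ∧ IsCompact (closure W) ∧
      (i ∈ t → (K i ⊆ W ∧ closure W ⊆ f i)) := by
    intro i
    by_cases hi : i ∈ t
    · obtain ⟨W, hWO, hKW, hWc, hWf⟩ :=
        exists_O_between hO_empty hO_basis hO_union (hKc i) (hf i) (hKU i)
      exact ⟨W, hWO, hWc, fun _ => ⟨hKW, hWf⟩⟩
    · exact ⟨∅, hO_empty, by simp, fun h => absurd h hi⟩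
  choose W hWO hWc hWt using hex
  have hclW : closure U ⊆ ⋃ i ∈ t, W i := by
    rw [hKeq]; exact Set.iUnion₂_mono fun i hi => (hWt i hi).1
  calc ν U ≤ ν (⋃ i ∈ t, W i) :=
        hmono U hU _ (biUnion_mem hO_empty hO_union t W fun i _ => hWO i)
          (subset_closure.trans hclW)
    _ ≤ ∑ i ∈ t, ν (W i) := nu_biUnion_le hν0 hO_empty hO_union hsub t W fun i _ => hWO i
    _ ≤ ∑ i ∈ t, lamFun O ν (f i) :=
        Finset.sum_le_sum fun i hi => le_lamFun (hWO i) (hWc i) (hWt i hi).2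
    _ ≤ ∑' i, lamFun O ν (f i) := ENNReal.sum_le_tsum t

variable [MeasurableSpace X] [BorelSpace X]

lemma part1
    (hO_open : ∀ U ∈ O, IsOpen U)
    (hO_empty : (∅ : Set X) ∈ O)
    (hO_basis : TopologicalSpace.IsTopologicalBasis O)
    (hO_union : ∀ U ∈ O, ∀ V ∈ O, U ∪ V ∈ O)
    (μ : Measure X) (hμ : IsRegularBorel μ) :
    IsRegularDimFun O (fun V : Set X => μ V) := by
  refine ⟨by simp, fun V₁ _ V₂ _ h => measure_mono h,
    fun V₁ _ V₂ _ => measure_union_le _ _,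
    fun V₁ h₁ V₂ h₂ hd => measure_union hd ((hO_open _ h₂).measurableSet), ?_⟩
  intro V hV
  beta_reduce
  apply le_antisymm
  · rw [hμ.2 V (hO_open _ hV)]
    refine iSup_le fun K => iSup_le fun hK => iSup_le fun hKV => ?_
    obtain ⟨U, hUO, hKU, hUc, hUV⟩ :=
      exists_O_between hO_empty hO_basis hO_union hK (hO_open _ hV) hKV
    exact le_trans (measure_mono hKU)
      (le_iSup_of_le U (le_iSup_of_le hUO (le_iSup_of_le ⟨hUc, hUV⟩ le_rfl)))
  · refine iSup_le fun U => iSup_le fun _ => iSup_le fun hU => ?_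
    exact measure_mono (subset_closure.trans hU.2)

lemma part2
    (hO_open : ∀ U ∈ O, IsOpen U)
    (hO_empty : (∅ : Set X) ∈ O)
    (hO_basis : TopologicalSpace.IsTopologicalBasis O)
    (hO_union : ∀ U ∈ O, ∀ V ∈ O, U ∪ V ∈ O)
    (μ₁ μ₂ : Measure X) (h₁ : IsRegularBorel μ₁) (h₂ : IsRegularBorel μ₂)
    (hagree : ∀ V ∈ O, μ₁ V = μ₂ V) : μ₁ = μ₂ := by
  have hopen : ∀ V : Set X, IsOpen V → μ₁ V = μ₂ V := by
    have key : ∀ (μ μ' : Measure X), IsRegularBorel μ → IsRegularBorel μ' →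
        (∀ V ∈ O, μ V = μ' V) → ∀ V : Set X, IsOpen V → μ V ≤ μ' V := by
      intro μ μ' hμ hμ' hag V hV
      rw [hμ.2 V hV]
      refine iSup_le fun K => iSup_le fun hK => iSup_le fun hKV => ?_
      obtain ⟨U, hUO, hKU, _, hUV⟩ :=
        exists_O_between hO_empty hO_basis hO_union hK hV hKV
      calc μ K ≤ μ U := measure_mono hKU
        _ = μ' U := hag U hUO
        _ ≤ μ' V := measure_mono (subset_closure.trans hUV)
    exact fun V hV => le_antisymm (key μ₁ μ₂ h₁ h₂ hagree V hV)
      (key μ₂ μ₁ h₂ h₁ (fun U hU => (hagree U hU).symm) V hV)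
  ext s hs
  rw [h₁.1 s hs, h₂.1 s hs]
  exact iInf_congr fun V => iInf_congr fun hV => iInf_congr fun _ => hopen V hV

lemma part3
    (hO_open : ∀ U ∈ O, IsOpen U)
    (hO_empty : (∅ : Set X) ∈ O)
    (hO_basis : TopologicalSpace.IsTopologicalBasis O)
    (hO_union : ∀ U ∈ O, ∀ V ∈ O, U ∪ V ∈ O)
    (ν : Set X → ℝ≥0∞) (hν : IsRegularDimFun O ν) :
    ∃ μ : Measure X, IsRegularBorel μ ∧ ∀ V ∈ O, μ V = ν V := by
  classical
  obtain ⟨hν0, hmono, hsub, hadd, hreg⟩ := hν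
  set p : Set X → ℝ≥0∞ := fun s => if IsOpen s then lamFun O ν s else ⊤ with hp
  have hp0 : p ∅ = 0 := by
    simp only [hp, if_pos isOpen_empty]; exact lamFun_empty hν0
  set m : OuterMeasure X := OuterMeasure.ofFunction p hp0 with hm
  have m_eq : ∀ A : Set X,
      m A = ⨅ (V : Set X) (_ : IsOpen V) (_ : A ⊆ V), lamFun O ν V := by
    intro A
    apply le_antisymm
    · refine le_iInf fun V => le_iInf fun hV => le_iInf fun hAV => ?_
      calc m A ≤ m V := OuterMeasure.mono m hAV
        _ ≤ p V := OuterMeasure.ofFunction_le V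
        _ = lamFun O ν V := if_pos hV
    · rw [hm, OuterMeasure.ofFunction_apply]
      refine le_iInf fun f => le_iInf fun hcov => ?_
      by_cases hop : ∀ n, IsOpen (f n)
      · have h1 : (⨅ (V : Set X) (_ : IsOpen V) (_ : A ⊆ V), lamFun O ν V)
            ≤ lamFun O ν (⋃ n, f n) :=
          iInf_le_of_le _ (iInf_le_of_le (isOpen_iUnion hop) (iInf_le _ hcov))
        refine h1.trans ((lamFun_iUnion_le hO_empty hO_basis hO_union hν0 hmono hsub
          f hop).trans (ENNReal.tsum_le_tsum fun n => ?_))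
        rw [hp]; simp only [if_pos (hop n)]; exact le_rfl
      · push_neg at hop
        obtain ⟨n, hn⟩ := hop
        have h2 : p (f n) = ⊤ := if_neg hn
        have h3 : (⊤ : ℝ≥0∞) ≤ ∑' i, p (f i) := h2 ▸ ENNReal.le_tsum n
        exact le_trans le_top h3
  have hcar : ∀ V : Set X, IsOpen V → MeasurableSet[m.caratheodory] V := by
    intro V hV
    rw [OuterMeasure.isCaratheodory_iff_le]
    intro A
    rw [m_eq A]
    refine le_iInf fun W => le_iInf fun hW => le_iInf fun hAW => ?_
    have h0 : m (A \ V) ≤ lamFun O ν W := by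
      rw [m_eq]
      exact iInf_le_of_le W (iInf_le_of_le hW (iInf_le _ (Set.diff_subset.trans hAW)))
    have step1 : ∀ U₁, U₁ ∈ O → IsCompact (closure U₁) ∧ closure U₁ ⊆ W ∩ V →
        ν U₁ + m (A \ V) ≤ lamFun O ν W := by
      rintro U₁ hU₁ ⟨hc₁, hs₁⟩
      have hAVsub : A \ V ⊆ W \ closure U₁ := fun x hx =>
        ⟨hAW hx.1, fun hxc => hx.2 (hs₁ hxc).2⟩
      have hmAV : m (A \ V) ≤ lamFun O ν (W \ closure U₁) := by
        rw [m_eq]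
        exact iInf_le_of_le _ (iInf_le_of_le (hW.sdiff isClosed_closure) (iInf_le _ hAVsub))
      refine le_trans (add_le_add_right hmAV _) ?_
      rw [add_comm]
      refine lamFun_add_le (le_lamFun hU₁ hc₁ (hs₁.trans Set.inter_subset_left)) ?_
      rintro U₂ hU₂ ⟨hc₂, hs₂⟩
      have hdisj : Disjoint U₁ U₂ := Set.disjoint_left.2 fun x hx1 hx2 =>
        ((subset_closure.trans hs₂) hx2).2 (subset_closure hx1)
      have hun : ν U₂ + ν U₁ = ν (U₁ ∪ U₂) := by
        rw [add_comm]; exact (hadd U₁ hU₁ U₂ hU₂ hdisj).symm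
      rw [hun]
      refine le_lamFun (hO_union _ hU₁ _ hU₂) ?_ ?_
      · rw [closure_union]; exact hc₁.union hc₂
      · rw [closure_union]
        exact Set.union_subset (hs₁.trans Set.inter_subset_left)
          (hs₂.trans Set.diff_subset)
    have hmAV2 : m (A ∩ V) ≤ lamFun O ν (W ∩ V) := by
      rw [m_eq]
      exact iInf_le_of_le _ (iInf_le_of_le (hW.inter hV)
        (iInf_le _ (Set.inter_subset_inter_left V hAW)))
    exact le_trans (add_le_add_left hmAV2 _) (lamFun_add_le h0 step1)
  have hle : (inferInstance : MeasurableSpace X) ≤ m.caratheodory := by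
    have hb : borel X ≤ m.caratheodory :=
      MeasurableSpace.generateFrom_le fun s hs => hcar s hs
    exact BorelSpace.measurable_eq.le.trans hb
  set μ : Measure X := m.toMeasure hle with hμdef
  have μ_open : ∀ V : Set X, IsOpen V → μ V = lamFun O ν V := by
    intro V hV
    rw [hμdef, toMeasure_apply m hle hV.measurableSet, m_eq]
    apply le_antisymm
    · exact iInf_le_of_le V (iInf_le_of_le hV (iInf_le _ le_rfl))
    · exact le_iInf fun W => le_iInf fun hW => le_iInf fun hVW => lamFun_mono hVW
  refine ⟨μ, ⟨?_, ?_⟩, ?_⟩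
  · intro E hE
    rw [hμdef, toMeasure_apply m hle hE, m_eq]
    refine iInf_congr fun V => iInf_congr fun hV => iInf_congr fun _ => ?_
    rw [← hμdef, μ_open V hV]
  · intro V hV
    rw [μ_open V hV]
    apply le_antisymm
    · refine lamFun_le fun U hU hP => ?_
      obtain ⟨hc, hs⟩ := hP
      have h1 : ν U ≤ μ (closure U) := by
        rw [hμdef, toMeasure_apply m hle isClosed_closure.measurableSet, m_eq]
        exact le_iInf fun W => le_iInf fun hW => le_iInf fun hsW => le_lamFun hU hc hsW
      exact h1.trans (le_iSup_of_le (closure U) (le_iSup_of_le hc (le_iSup_of_le hs le_rfl)))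
    · refine iSup_le fun K => iSup_le fun hK => iSup_le fun hKV => ?_
      rw [hμdef, toMeasure_apply m hle hK.measurableSet, m_eq]
      exact iInf_le_of_le V (iInf_le_of_le hV (iInf_le_of_le hKV le_rfl))
  · intro V hV
    rw [μ_open V (hO_open V hV)]
    exact (hreg V hV).symm

end Stmt19Aux

/-- Riesz's Theorem for dimension functions: on a locally compact Hausdorff space, with
`O` a basis containing `∅` and closed under finite unions, restriction is a bijection
between regular Borel measures on `X` and regular dimension functions on `O`. -/
theorem stmt19 {X : Type*} [TopologicalSpace X] [T2Space X] [LocallyCompactSpace X]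
    [MeasurableSpace X] [BorelSpace X]
    (O : Set (Set X))
    (hO_open : ∀ U ∈ O, IsOpen U)
    (hO_empty : (∅ : Set X) ∈ O)
    (hO_basis : TopologicalSpace.IsTopologicalBasis O)
    (hO_union : ∀ U ∈ O, ∀ V ∈ O, U ∪ V ∈ O) :
    (∀ μ : Measure X, IsRegularBorel μ →
      IsRegularDimFun O (fun V : Set X => μ V)) ∧
    (∀ μ₁ μ₂ : Measure X, IsRegularBorel μ₁ → IsRegularBorel μ₂ →
      (∀ V ∈ O, μ₁ V = μ₂ V) → μ₁ = μ₂) ∧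
    (∀ ν : Set X → ℝ≥0∞, IsRegularDimFun O ν →
      ∃ μ : Measure X, IsRegularBorel μ ∧ ∀ V ∈ O, μ V = ν V) := by
  exact ⟨Stmt19Aux.part1 hO_open hO_empty hO_basis hO_union,
    Stmt19Aux.part2 hO_open hO_empty hO_basis hO_union,
    Stmt19Aux.part3 hO_open hO_empty hO_basis hO_union⟩
end
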